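/- The semigroup T presented by ⟨a, b | b*a*a*b = b*a⟩ is not LEF. -/

import Mathlib

namespace Stmt8

/-- A semigroup `S` is LEF if for every finite subset `H` of `S` there exist a finite
semigroup `F` and a function `f : S → F` injective on `H` such that
`f (x * y) = f x * f y` whenever `x, y, x * y ∈ H`. -/
def IsLEF (S : Type*) [Semigroup S] : Prop :=
  ∀ H : Finset S, ∃ (F : Type) (_ : Semigroup F) (_ : Fintype F) (f : S → F),
    Set.InjOn f ↑H ∧
      ∀ x ∈ H, ∀ y ∈ H, x * y ∈ H → f (x * y) = f x * f y

/-- The generator `a` of the free semigroup on two generators. -/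
def a : FreeSemigroup (Fin 2) := FreeSemigroup.of 0

/-- The generator `b` of the free semigroup on two generators. -/
def b : FreeSemigroup (Fin 2) := FreeSemigroup.of 1

/-- The defining relation `b * a * a * b = b * a`. -/
def rel : FreeSemigroup (Fin 2) → FreeSemigroup (Fin 2) → Prop :=
  fun x y => x = b * a * a * b ∧ y = b * a

/-- The semigroup `T = ⟨a, b ∣ baab = ba⟩`. -/
def T : Type := (conGen rel).Quotient

instance : Semigroup T := Con.semigroup _

/- ### Auxiliary material -/

theorem finKeyAux {M : Type*} [Monoid M] (A B : M)
    (hpow : ∀ n : ℕ, B * A ^ (n + 2) * B = B * A ^ (n + 1))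
    (x y : ℕ) (hlt : x < y) (he : A ^ (x + 1) = A ^ (y + 1)) :
    B * A * B * A = B * A := by
  obtain ⟨q, hq⟩ : ∃ q, y = x + q + 1 := ⟨y - x - 1, by omega⟩
  subst hq
  have hper : B * A ^ (x + q + 2) = B * A ^ (x + 1) := by
    rw [show x + q + 2 = x + q + 1 + 1 from rfl, ← he]
  have down : ∀ j : ℕ, B * A ^ (j + q + 2) = B * A ^ (j + 1) →
      B * A ^ (q + 2) = B * A ^ 1 := by
    intro j
    induction j with
    | zero => intro hh; simpa using hh
    | succ k ih =>
      intro hh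
      have h2 : B * A ^ (k + 1 + q + 2) * B = B * A ^ (k + 2) * B := by
        rw [hh]
      rw [show k + 1 + q + 2 = (k + q + 1) + 2 from by omega, hpow (k + q + 1),
        hpow k] at h2
      exact ih (by simpa [show k + q + 1 + 1 = k + q + 2 from rfl] using h2)
  have Q0 : B * A ^ (q + 2) = B * A ^ 1 := down x hper
  have hbab : B * A * B = B * A ^ (q + 1) := by
    have h3 : B * A ^ (q + 2) * B = B * A ^ 1 * B := by rw [Q0]
    rw [hpow q] at h3
    simpa [pow_one] using h3.symm
  calc B * A * B * A = B * A ^ (q + 1) * A := by rw [hbab]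
    _ = B * (A ^ (q + 1) * A) := by rw [mul_assoc]
    _ = B * A ^ (q + 2) := by rw [← pow_succ]
    _ = B * A ^ 1 := Q0
    _ = B * A := by rw [pow_one]

/-- In a finite monoid, `B*A*A*B = B*A` forces `B*A*B*A = B*A`. -/
theorem finKey {M : Type*} [Monoid M] [Finite M] (A B : M)
    (h : B * A * A * B = B * A) : B * A * B * A = B * A := by
  have hpow : ∀ n : ℕ, B * A ^ (n + 2) * B = B * A ^ (n + 1) := by
    intro n
    induction n with
    | zero => simpa [pow_succ, pow_one, mul_assoc] using h
    | succ k ih =>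
      have e1 : B * A ^ (k + 2) * B * (A * A * B) = B * A ^ (k + 3) * B := by
        rw [ih]
        calc B * A ^ (k + 1) * (A * A * B) = B * (A ^ (k + 1) * A * A) * B := by
              simp [mul_assoc]
          _ = B * A ^ (k + 3) * B := by rw [← pow_succ, ← pow_succ]
      have e2 : B * A ^ (k + 2) * B * (A * A * B) = B * A ^ (k + 2) := by
        calc B * A ^ (k + 2) * B * (A * A * B)
            = B * A ^ (k + 2) * (B * A * A * B) := by simp [mul_assoc]
          _ = B * A ^ (k + 2) * (B * A) := by rw [h]
          _ = B * A ^ (k + 2) * B * A := by simp [mul_assoc]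
          _ = B * A ^ (k + 1) * A := by rw [ih]
          _ = B * (A ^ (k + 1) * A) := by simp [mul_assoc]
          _ = B * A ^ (k + 2) := by rw [← pow_succ]
      have e3 : B * A ^ (k + 3) * B = B * A ^ (k + 2) := by rw [← e1, e2]
      simpa using e3
  obtain ⟨x, y, hxy, he⟩ := Finite.exists_ne_map_eq_of_infinite (fun n : ℕ => A ^ (n + 1))
  rcases hxy.lt_or_gt with hlt | hlt
  · exact finKeyAux A B hpow x y hlt he
  · exact finKeyAux A B hpow y x hlt he.symm

/-- Same statement for finite semigroups, via adjoining a unit. -/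
theorem finKeySemigroup {F : Type} [Semigroup F] [Fintype F] (A B : F)
    (h : B * A * A * B = B * A) : B * A * B * A = B * A := by
  haveI : Finite (WithOne F) := Finite.of_equiv (Option F) (Equiv.refl _)
  have h' : (B : WithOne F) * A * A * B = (B : WithOne F) * A := by
    exact_mod_cast congrArg (fun x : F => (x : WithOne F)) h
  have hk := finKey (M := WithOne F) (A : WithOne F) (B : WithOne F) h'
  exact_mod_cast hk

/- ### The separating infinite model -/

/-- `A x` is the largest odd number `< x` (or `0`). -/
def fA : Function.End ℕ := fun x => 2 * (x / 2) - 1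

/-- `B x = x + 2`. -/
def fB : Function.End ℕ := fun x => x + 2

def gen : Fin 2 → Function.End ℕ := fun i => if i = 0 then fA else fB

def φ : FreeSemigroup (Fin 2) →ₙ* Function.End ℕ := FreeSemigroup.lift gen

lemma φ_a : φ a = fA := by simp [φ, a, gen]

lemma φ_b : φ b = fB := by simp [φ, b, gen]

lemma φ_rel : φ (b * a * a * b) = φ (b * a) := by
  simp only [map_mul, φ_a, φ_b]
  funext x
  show fB (fA (fA (fB x))) = fB (fA x)
  simp only [fA, fB]
  omega

lemma φ_sep : φ (b * a) ≠ φ (b * a * b * a) := by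
  intro hcontra
  have h0 := congrFun hcontra 0
  simp only [map_mul, φ_a, φ_b] at h0
  change fB (fA 0) = fB (fA (fB (fA 0))) at h0
  simp only [fA, fB] at h0
  omega

/-- The congruence induced by `φ`. -/
def cφ : Con (FreeSemigroup (Fin 2)) := Con.ker φ

lemma conGen_le_cφ : conGen rel ≤ cφ := by
  apply Con.conGen_le.mpr
  rintro x y ⟨hx, hy⟩
  subst hx; subst hy
  exact φ_rel

/-- The canonical map to the quotient. -/
def toT (x : FreeSemigroup (Fin 2)) : T := (x : (conGen rel).Quotient)

lemma toT_mul (x y : FreeSemigroup (Fin 2)) : toT (x * y) = toT x * toT y := rfl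

lemma toT_eq_iff (x y : FreeSemigroup (Fin 2)) : toT x = toT y ↔ (conGen rel) x y :=
  Con.eq _

/-- `ba ≠ baba` in `T`. -/
lemma ba_ne_baba : toT (b * a) ≠ toT (b * a * b * a) := by
  intro hcontra
  rw [toT_eq_iff] at hcontra
  exact φ_sep (Con.le_def.mp conGen_le_cφ hcontra)

/-- `baab = ba` in `T`. -/
lemma baab_eq_ba : toT (b * a * a * b) = toT (b * a) := by
  rw [toT_eq_iff]
  exact ConGen.Rel.of _ _ ⟨rfl, rfl⟩

def ta : T := toT a
def tb : T := toT b
def tba : T := toT (b * a)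
def tbaa : T := toT (b * a * a)
def tbab : T := toT (b * a * b)
def tbaba : T := toT (b * a * b * a)

/- ### Main theorem -/

/-- The semigroup `T = ⟨a, b ∣ baab = ba⟩` is not LEF. -/
theorem T_not_isLEF : ¬ IsLEF T := by
  classical
  intro hLEF
  obtain ⟨F, hS, hFin, f, hinj, hmul⟩ :=
    hLEF ({ta, tb, tba, tbaa, tbab, tbaba} : Finset T)
  have mem_ta : ta ∈ ({ta, tb, tba, tbaa, tbab, tbaba} : Finset T) := by simp
  have mem_tb : tb ∈ ({ta, tb, tba, tbaa, tbab, tbaba} : Finset T) := by simp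
  have mem_tba : tba ∈ ({ta, tb, tba, tbaa, tbab, tbaba} : Finset T) := by simp
  have mem_tbaa : tbaa ∈ ({ta, tb, tba, tbaa, tbab, tbaba} : Finset T) := by simp
  have mem_tbab : tbab ∈ ({ta, tb, tba, tbaa, tbab, tbaba} : Finset T) := by simp
  have mem_tbaba : tbaba ∈ ({ta, tb, tba, tbaa, tbab, tbaba} : Finset T) := by simp
  -- products in T
  have pba : tb * ta = tba := rfl
  have pbaa : tba * ta = tbaa := rfl
  have pbaab : tbaa * tb = tba := by
    show toT (b * a * a) * toT b = tba
    rw [← toT_mul]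
    exact baab_eq_ba
  have pbab : tba * tb = tbab := rfl
  have pbaba : tbab * ta = tbaba := rfl
  -- transfer to F
  have fba : f tba = f tb * f ta := by
    rw [← pba]; exact hmul tb mem_tb ta mem_ta (pba ▸ mem_tba)
  have fbaa : f tbaa = f tba * f ta := by
    rw [← pbaa]; exact hmul tba mem_tba ta mem_ta (pbaa ▸ mem_tbaa)
  have fbaab : f tba = f tbaa * f tb := by
    conv_lhs => rw [← pbaab]
    exact hmul tbaa mem_tbaa tb mem_tb (pbaab ▸ mem_tba)
  have fbab : f tbab = f tba * f tb := by
    rw [← pbab]; exact hmul tba mem_tba tb mem_tb (pbab ▸ mem_tbab)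
  have fbaba : f tbaba = f tbab * f ta := by
    rw [← pbaba]; exact hmul tbab mem_tbab ta mem_ta (pbaba ▸ mem_tbaba)
  have hrel : f tb * f ta * f ta * f tb = f tb * f ta := by
    calc f tb * f ta * f ta * f tb = (f tb * f ta) * f ta * f tb := rfl
      _ = f tba * f ta * f tb := by rw [← fba]
      _ = f tbaa * f tb := by rw [← fbaa]
      _ = f tba := fbaab.symm
      _ = f tb * f ta := fba
  have hkey : f tb * f ta * f tb * f ta = f tb * f ta :=
    finKeySemigroup (f ta) (f tb) hrel
  have hfeq : f tbaba = f tba := by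
    rw [fbaba, fbab, fba]
    exact hkey
  have heq : tbaba = tba := hinj (by simp) (by simp) hfeq
  exact ba_ne_baba heq.symm

end Stmt8
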